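/- Let t > 0, y > t and F(x) = |x| + (x − y)²/(2t). Then for all real numbers a ≤ b, the ratio (∫_{(y−t)+√T·a}^{(y−t)+√T·b} exp(−F(x)/T) dx) / (∫_ℝ exp(−F(x)/T) dx) converges, as T → 0⁺, to ∫_a^b (1/√(2πt)) · exp(−x²/(2t)) dx. In other words, (X_T(y,t) − (y − t))/√T converges in distribution to a centered Gaussian N(0,t) with variance t. -/

import Mathlib

open Filter MeasureTheory

/-- The one-dimensional objective `F(x) = |x| + (x − y)²/(2t)`. -/
noncomputable def obj1 (y t x : ℝ) : ℝ := |x| + (x - y) ^ 2 / (2 * t)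


open Real in
lemma aux_exp_neg_le {z : ℝ} (hz : 0 < z) : Real.exp (-z) ≤ 4 / z ^ 2 := by
  have h1 : z / 2 ≤ Real.exp (z / 2) := by
    nlinarith [Real.add_one_le_exp (z / 2)]
  have h2 : z ^ 2 / 4 ≤ Real.exp z := by
    have := mul_le_mul h1 h1 (by positivity) (Real.exp_pos _).le
    rw [← Real.exp_add, show z/2+z/2 = z by ring] at this
    nlinarith
  rw [Real.exp_neg, inv_eq_one_div, div_le_div_iff₀ (Real.exp_pos _) (by positivity)]
  nlinarith [Real.exp_pos z]

lemma aux_gauss_integrable (c s : ℝ) (hc : 0 < c) :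
    Integrable (fun x : ℝ => Real.exp (-(x - s) ^ 2 * c)) := by
  have := (integrable_exp_neg_mul_sq hc).comp_sub_right s
  convert this using 2 with x
  ring_nf


open Real in
set_option maxHeartbeats 2000000 in
/-- For `y > t`, `(X_T − (y − t))/√T` converges in distribution to the centered
Gaussian `N(0,t)` with variance `t`. -/
theorem stmt12 (t y : ℝ) (ht : 0 < t) (hyt : t < y) (a b : ℝ) (hab : a ≤ b) :
    Tendsto
      (fun T : ℝ =>
        (∫ x in ((y - t) + Real.sqrt T * a)..((y - t) + Real.sqrt T * b),
            Real.exp (-(obj1 y t x) / T)) /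
          ∫ x : ℝ, Real.exp (-(obj1 y t x) / T))
      (nhdsWithin 0 (Set.Ioi 0))
      (nhds (∫ x in a..b, 1 / Real.sqrt (2 * Real.pi * t) * Real.exp (-x ^ 2 / (2 * t)))) := by
  set l := nhdsWithin (0:ℝ) (Set.Ioi 0) with hl
  set s : ℝ := y - t with hs
  have hspos : 0 < s := by simp [hs]; linarith
  set m : ℝ := y - t/2 with hm
  set δ : ℝ := (y - t)^2 / (2*t) with hδ
  have hδpos : 0 < δ := by positivity
  set I : ℝ := ∫ u in a..b, Real.exp (-u^2 / (2*t)) with hI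
  set f : ℝ → ℝ → ℝ := fun T x => Real.exp (-(obj1 y t x) / T) with hf
  set g : ℝ → ℝ → ℝ := fun T x => Real.exp (-(x - s)^2 * (2*t*T)⁻¹) with hg
  -- integrability
  have hgint : ∀ T : ℝ, 0 < T → Integrable (g T) := fun T hT =>
    aux_gauss_integrable _ s (by positivity)
  have hfle : ∀ T : ℝ, 0 < T → ∀ x : ℝ,
      f T x ≤ Real.exp (-(x - y)^2 * (2*t*T)⁻¹) := by
    intro T hT x
    apply Real.exp_le_exp.2
    have ht' : (t:ℝ) ≠ 0 := ht.ne'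
    have hT' : (T:ℝ) ≠ 0 := hT.ne'
    have key : -(obj1 y t x) ≤ -((x-y)^2/(2*t)) := by
      simp only [obj1]; nlinarith [abs_nonneg x]
    calc -(obj1 y t x)/T = -(obj1 y t x) * T⁻¹ := by ring
      _ ≤ (-((x-y)^2/(2*t))) * T⁻¹ := by
            exact mul_le_mul_of_nonneg_right key (by positivity)
      _ = -(x-y)^2 * (2*t*T)⁻¹ := by field_simp
  have hfint : ∀ T : ℝ, 0 < T → Integrable (f T) := by
    intro T hT
    apply Integrable.mono (aux_gauss_integrable ((2*t*T)⁻¹) y (by positivity))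
    · apply Continuous.aestronglyMeasurable
      unfold f
      unfold obj1
      fun_prop
    · filter_upwards with x
      rw [Real.norm_of_nonneg (Real.exp_nonneg _), Real.norm_of_nonneg (Real.exp_nonneg _)]
      exact hfle T hT x
  set L : ℝ → ℝ := fun T => ∫ x in Set.Iio 0, f T x with hLdef
  set r : ℝ → ℝ := fun T => ∫ x in Set.Iio 0, g T x with hrdef
  have hgfull : ∀ T : ℝ, 0 < T → (∫ x : ℝ, g T x) = Real.sqrt (2*Real.pi*t) * Real.sqrt T := by
    intro T hT
    have h1 : (fun x : ℝ => g T x)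
        = fun x => (fun u => Real.exp (-(2*t*T)⁻¹ * u ^ 2)) (x - s) := by
      funext x; simp only [hg]; ring_nf
    rw [h1, integral_sub_right_eq_self (fun u : ℝ => Real.exp (-(2*t*T)⁻¹ * u ^ 2)) s,
      integral_gaussian,
      show Real.pi/(2*t*T)⁻¹ = (2*Real.pi*t)*T by field_simp,
      Real.sqrt_mul (by positivity)]
  have hsplitf : ∀ T : ℝ, 0 < T → L T + (∫ x in Set.Ici 0, f T x) = ∫ x, f T x :=
    fun T hT => intervalIntegral.integral_Iio_add_Ici ((hfint T hT).integrableOn) ((hfint T hT).integrableOn)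
  have hsplitg : ∀ T : ℝ, 0 < T → r T + (∫ x in Set.Ici 0, g T x) = ∫ x, g T x :=
    fun T hT => intervalIntegral.integral_Iio_add_Ici ((hgint T hT).integrableOn) ((hgint T hT).integrableOn)
  have hRici : ∀ T : ℝ, 0 < T →
      (∫ x in Set.Ici 0, f T x) = Real.exp (-m/T) * (∫ x in Set.Ici 0, g T x) := by
    intro T hT
    rw [← integral_const_mul]
    apply setIntegral_congr_fun measurableSet_Ici
    intro x hx
    simp only [hf, hg]
    rw [← Real.exp_add]
    congr 1
    simp only [obj1, abs_of_nonneg (Set.mem_Ici.mp hx), hs, hm]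
    field_simp
    ring
  have hD : ∀ T : ℝ, 0 < T → (∫ x, f T x)
      = L T + Real.exp (-m/T) * (Real.sqrt (2*Real.pi*t) * Real.sqrt T - r T) := by
    intro T hT
    have h2 := hsplitg T hT
    rw [hgfull T hT] at h2
    have h3 : (∫ x in Set.Ici 0, g T x) = Real.sqrt (2*Real.pi*t) * Real.sqrt T - r T := by
      linarith
    rw [← hsplitf T hT, hRici T hT, h3]
  have hDpos : ∀ T : ℝ, 0 < T → 0 < ∫ x, f T x := by
    intro T hT
    apply (integral_pos_iff_support_of_nonneg (fun x => Real.exp_nonneg _) (hfint T hT)).2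
    have hsupp : Function.support (f T) = Set.univ := by
      ext x; simp [hf, Real.exp_ne_zero]
    rw [hsupp]
    simp
  set T₀ : ℝ := min 1 ((s/(1+|a|))^2) with hT₀
  have hT₀pos : 0 < T₀ := lt_min one_pos (by positivity)
  have hN : ∀ T : ℝ, T ∈ Set.Ioo 0 T₀ →
      (∫ x in (s + Real.sqrt T * a)..(s + Real.sqrt T * b), f T x)
        = Real.exp (-m/T) * (Real.sqrt T * I) := by
    intro T hTmem
    obtain ⟨hT1, hT2⟩ := hTmem
    have hst : Real.sqrt T * (1 + |a|) < s := by
      have h2 : Real.sqrt T < s/(1+|a|) := by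
        have h3 : T < (s/(1+|a|))^2 := lt_of_lt_of_le hT2 (min_le_right _ _)
        have h4 := Real.sqrt_lt_sqrt hT1.le h3
        rwa [Real.sqrt_sq (by positivity)] at h4
      rwa [← lt_div_iff₀ (by positivity)]
    have hlo : 0 < s + Real.sqrt T * a := by
      nlinarith [mul_le_mul_of_nonneg_left (neg_abs_le a) (Real.sqrt_nonneg T),
        Real.sqrt_nonneg T, abs_nonneg a]
    have hle : s + Real.sqrt T * a ≤ s + Real.sqrt T * b := by
      nlinarith [Real.sqrt_nonneg T]
    have step1 : (∫ x in (s + Real.sqrt T * a)..(s + Real.sqrt T * b), f T x)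
        = Real.exp (-m/T) * ∫ x in (s + Real.sqrt T * a)..(s + Real.sqrt T * b), g T x := by
      rw [← intervalIntegral.integral_const_mul]
      apply intervalIntegral.integral_congr
      intro x hx
      rw [Set.uIcc_of_le hle] at hx
      have hx0 : (0:ℝ) ≤ x := le_trans hlo.le hx.1
      simp only [hf, hg]
      rw [← Real.exp_add]
      congr 1
      simp only [obj1, abs_of_nonneg hx0, hs, hm]
      field_simp
      ring
    have step2 : (∫ x in (s + Real.sqrt T * a)..(s + Real.sqrt T * b), g T x)
        = Real.sqrt T * I := by
      have key := intervalIntegral.smul_integral_comp_mul_add (a := a) (b := b)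
        (g T) (Real.sqrt T) s
      rw [smul_eq_mul] at key
      rw [show s + Real.sqrt T * a = Real.sqrt T * a + s by ring,
          show s + Real.sqrt T * b = Real.sqrt T * b + s by ring, ← key]
      congr 1
      rw [hI]
      apply intervalIntegral.integral_congr
      intro x _
      simp only [hg]
      congr 1
      rw [show Real.sqrt T * x + s - s = Real.sqrt T * x by ring, mul_pow,
        Real.sq_sqrt hT1.le]
      field_simp
    rw [step1, step2]
  set S : ℝ := Real.sqrt (2*Real.pi*t) with hS
  have hSpos : 0 < S := by rw [hS]; positivity
  set J : ℝ → ℝ := fun T => Real.exp (m/T) * (∫ x, f T x) / Real.sqrt T with hJdef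
  set ε : ℝ → ℝ := fun T => Real.exp (m/T) * L T / Real.sqrt T with hεdef
  set ρ : ℝ → ℝ := fun T => r T / Real.sqrt T with hρdef
  have hsqrt0 : Tendsto (fun T : ℝ => Real.sqrt T) l (nhds 0) := by
    have h1 : Tendsto (fun T : ℝ => T) l (nhds 0) :=
      tendsto_id.mono_left nhdsWithin_le_nhds
    have h2 := (Real.continuous_sqrt.tendsto 0).comp h1
    simpa [Function.comp_def] using h2
  have hIoo : ∀ c : ℝ, 0 < c → ∀ᶠ T in l, T ∈ Set.Ioo 0 c := by
    intro c hc
    filter_upwards [Ioo_mem_nhdsGT hc] with T hT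
    exact hT
  have hLnonneg : ∀ T : ℝ, 0 ≤ L T := fun T =>
    setIntegral_nonneg measurableSet_Iio (fun x _ => Real.exp_nonneg _)
  have hrnonneg : ∀ T : ℝ, 0 ≤ r T := fun T =>
    setIntegral_nonneg measurableSet_Iio (fun x _ => Real.exp_nonneg _)
  have hTinv : ∀ T : ℝ, T ∈ Set.Ioo (0:ℝ) 1 → 1 ≤ T⁻¹ := by
    intro T ⟨hT1, hT2⟩
    nlinarith [mul_inv_cancel₀ hT1.ne', inv_pos.2 hT1]
  -- bound on the left piece of the denominator
  have hLbound : ∀ T : ℝ, T ∈ Set.Ioo (0:ℝ) 1 → L T ≤ Real.exp (-(m+δ)/T) := by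
    intro T hTmem
    obtain ⟨hT1, hT2⟩ := hTmem
    have hTi := hTinv T ⟨hT1, hT2⟩
    have step : L T ≤ ∫ x in Set.Iio (0:ℝ), Real.exp (-(m+δ)/T) * Real.exp x := by
      apply setIntegral_mono_on ((hfint T hT1).integrableOn) ?_ measurableSet_Iio
      · intro x hx
        have hx0 : x < 0 := hx
        simp only [hf]
        rw [← Real.exp_add]
        apply Real.exp_le_exp.2
        have e1 : m + δ - x - (-x + (x-y)^2/(2*t)) = (2*x*y - x^2)/(2*t) := by
          rw [hm, hδ]; field_simp; ring
        have e2 : (2*x*y - x^2)/(2*t) ≤ 0 := by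
          apply div_nonpos_of_nonpos_of_nonneg _ (by linarith)
          nlinarith
        have hkey : m + δ - x ≤ obj1 y t x := by
          simp only [obj1, abs_of_nonpos hx0.le]
          linarith
        have h5 : -(obj1 y t x) * T⁻¹ ≤ (x - (m+δ)) * T⁻¹ :=
          mul_le_mul_of_nonneg_right (by linarith) (by positivity)
        have h6 : x * T⁻¹ ≤ x := by nlinarith
        calc -(obj1 y t x)/T = -(obj1 y t x) * T⁻¹ := by ring
          _ ≤ (x - (m+δ)) * T⁻¹ := h5
          _ = -(m+δ) * T⁻¹ + x * T⁻¹ := by ring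
          _ ≤ -(m+δ) * T⁻¹ + x := by linarith
          _ = -(m+δ)/T + x := by ring
      · exact (((integrableOn_exp_Iic 0).mono_set Set.Iio_subset_Iic_self).const_mul _)
    rw [integral_const_mul, setIntegral_congr_set Iio_ae_eq_Iic, integral_exp_Iic,
      Real.exp_zero, mul_one] at step
    exact step
  -- bound on the gaussian left tail
  set K : ℝ := ∫ x : ℝ, Real.exp (-x^2 * (2*t)⁻¹) with hK
  have hKnonneg : 0 ≤ K := integral_nonneg (fun x => Real.exp_nonneg _)
  have hKint : Integrable (fun x : ℝ => Real.exp (-x^2 * (2*t)⁻¹)) := by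
    have := aux_gauss_integrable (2*t)⁻¹ 0 (by positivity)
    simpa using this
  have hrbound : ∀ T : ℝ, T ∈ Set.Ioo (0:ℝ) 1 →
      r T ≤ Real.exp (-(s^2 * (2*t*T)⁻¹)) * K := by
    intro T hTmem
    obtain ⟨hT1, hT2⟩ := hTmem
    have hA : (0:ℝ) < (2*t*T)⁻¹ := by positivity
    have hAB : (2*t)⁻¹ ≤ (2*t*T)⁻¹ := by
      apply inv_anti₀ (by positivity)
      nlinarith
    have step : r T ≤ ∫ x in Set.Iio (0:ℝ),
        Real.exp (-(s^2 * (2*t*T)⁻¹)) * Real.exp (-x^2 * (2*t)⁻¹) := by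
      apply setIntegral_mono_on ((hgint T hT1).integrableOn) ?_ measurableSet_Iio
      · intro x hx
        have hx0 : x < 0 := hx
        simp only [hg]
        rw [← Real.exp_add]
        apply Real.exp_le_exp.2
        have hxs : s^2 + x^2 ≤ (x - s)^2 := by nlinarith
        nlinarith [mul_le_mul_of_nonneg_left hAB (sq_nonneg x),
          mul_le_mul_of_nonneg_right hxs hA.le]
      · exact (hKint.integrableOn.const_mul _)
    calc r T ≤ ∫ x in Set.Iio (0:ℝ),
          Real.exp (-(s^2 * (2*t*T)⁻¹)) * Real.exp (-x^2 * (2*t)⁻¹) := step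
      _ = Real.exp (-(s^2 * (2*t*T)⁻¹)) * ∫ x in Set.Iio (0:ℝ),
          Real.exp (-x^2 * (2*t)⁻¹) := integral_const_mul _ _
      _ ≤ Real.exp (-(s^2 * (2*t*T)⁻¹)) * K := by
          apply mul_le_mul_of_nonneg_left _ (Real.exp_nonneg _)
          exact setIntegral_le_integral hKint (Filter.Eventually.of_forall fun x => Real.exp_nonneg _)
  -- limits of the error terms
  have hε0 : Tendsto ε l (nhds 0) := by
    apply squeeze_zero' ?_ ?_ (show Tendsto (fun T => 4/δ^2 * Real.sqrt T) l (nhds 0) by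
      simpa using hsqrt0.const_mul (4/δ^2))
    · filter_upwards [hIoo 1 one_pos] with T hT
      exact div_nonneg (mul_nonneg (Real.exp_nonneg _) (hLnonneg T)) (Real.sqrt_nonneg _)
    · filter_upwards [hIoo 1 one_pos] with T hTmem
      obtain ⟨hT1, hT2⟩ := hTmem
      have hsp : 0 < Real.sqrt T := Real.sqrt_pos.2 hT1
      have h1 : L T ≤ Real.exp (-(m+δ)/T) := hLbound T ⟨hT1, hT2⟩
      have h2 : ε T ≤ Real.exp (m/T) * Real.exp (-(m+δ)/T) / Real.sqrt T := by
        simp only [hεdef]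
        gcongr
      rw [← Real.exp_add, show m/T + -(m+δ)/T = -(δ/T) by field_simp; ring] at h2
      have h3 := aux_exp_neg_le (show 0 < δ/T by positivity)
      have h4 : 4/(δ/T)^2 = 4*T^2/δ^2 := by field_simp
      have h5 : Real.exp (-(δ/T)) ≤ 4*T^2/δ^2 := by rw [← h4]; exact h3
      have hTs : Real.sqrt T * Real.sqrt T = T := Real.mul_self_sqrt hT1.le
      have h6 : Real.exp (-(δ/T)) / Real.sqrt T ≤ (4*T^2/δ^2) / Real.sqrt T := by gcongr
      have h7 : (4*T^2/δ^2) / Real.sqrt T ≤ 4/δ^2 * Real.sqrt T := by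
        rw [div_le_iff₀ hsp]
        have h8 : T^2 ≤ T := by nlinarith
        calc 4*T^2/δ^2 ≤ 4*T/δ^2 := by gcongr
          _ = 4/δ^2 * (Real.sqrt T * Real.sqrt T) := by rw [hTs]; ring
          _ = 4/δ^2 * Real.sqrt T * Real.sqrt T := by ring
      linarith
  have hρ0 : Tendsto ρ l (nhds 0) := by
    apply squeeze_zero' ?_ ?_ (show Tendsto (fun T => 16*t^2/s^4*K * Real.sqrt T) l (nhds 0) by
      simpa using hsqrt0.const_mul (16*t^2/s^4*K))
    · filter_upwards [hIoo 1 one_pos] with T hT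
      exact div_nonneg (hrnonneg T) (Real.sqrt_nonneg _)
    · filter_upwards [hIoo 1 one_pos] with T hTmem
      obtain ⟨hT1, hT2⟩ := hTmem
      have hsp : 0 < Real.sqrt T := Real.sqrt_pos.2 hT1
      have h1 : r T ≤ Real.exp (-(s^2 * (2*t*T)⁻¹)) * K := hrbound T ⟨hT1, hT2⟩
      have h3 := aux_exp_neg_le (show 0 < s^2 * (2*t*T)⁻¹ by positivity)
      have h4 : 4/(s^2 * (2*t*T)⁻¹)^2 = 16*t^2*T^2/s^4 := by field_simp; ring
      have h5 : Real.exp (-(s^2 * (2*t*T)⁻¹)) ≤ 16*t^2*T^2/s^4 := by rw [← h4]; exact h3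
      have hTs : Real.sqrt T * Real.sqrt T = T := Real.mul_self_sqrt hT1.le
      have h2 : ρ T ≤ (16*t^2*T^2/s^4 * K) / Real.sqrt T := by
        simp only [hρdef]
        gcongr
        calc r T ≤ Real.exp (-(s^2 * (2*t*T)⁻¹)) * K := h1
          _ ≤ 16*t^2*T^2/s^4 * K := mul_le_mul_of_nonneg_right h5 hKnonneg
      have h7 : (16*t^2*T^2/s^4 * K) / Real.sqrt T ≤ 16*t^2/s^4*K * Real.sqrt T := by
        rw [div_le_iff₀ hsp]
        have h8 : T^2 ≤ T := by nlinarith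
        calc 16*t^2*T^2/s^4 * K ≤ 16*t^2*T/s^4 * K := by gcongr
          _ = 16*t^2/s^4*K * (Real.sqrt T * Real.sqrt T) := by rw [hTs]; ring
          _ = 16*t^2/s^4*K * Real.sqrt T * Real.sqrt T := by ring
      linarith
  -- J converges to √(2πt)
  have hJeq : ∀ T : ℝ, T ∈ Set.Ioo (0:ℝ) 1 → J T = S + (ε T - ρ T) := by
    intro T hTmem
    obtain ⟨hT1, hT2⟩ := hTmem
    have hsp : Real.sqrt T ≠ 0 := (Real.sqrt_pos.2 hT1).ne'
    have hme : Real.exp (m/T) * Real.exp (-m/T) = 1 := by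
      rw [← Real.exp_add, show m/T + -m/T = 0 by ring, Real.exp_zero]
    simp only [hJdef, hεdef, hρdef]
    rw [hD T hT1, show -m/T = -(m/T) by ring, Real.exp_neg]
    have he : Real.exp (m/T) ≠ 0 := (Real.exp_pos _).ne'
    field_simp
    ring
  have hJlim : Tendsto J l (nhds S) := by
    have base : Tendsto (fun T => S + (ε T - ρ T)) l (nhds (S + (0 - 0))) :=
      tendsto_const_nhds.add (hε0.sub hρ0)
    rw [show S + ((0:ℝ) - 0) = S by ring] at base
    apply base.congr'
    filter_upwards [hIoo 1 one_pos] with T hT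
    exact (hJeq T hT).symm
  -- final assembly
  have hfinal : Tendsto (fun T => I / J T) l (nhds (I / S)) :=
    tendsto_const_nhds.div hJlim hSpos.ne'
  have htarget : (∫ x in a..b, 1/Real.sqrt (2*Real.pi*t) * Real.exp (-x^2/(2*t))) = I / S := by
    rw [intervalIntegral.integral_const_mul, ← hI, ← hS, one_div, inv_mul_eq_div]
  rw [htarget]
  apply hfinal.congr'
  filter_upwards [hIoo T₀ hT₀pos] with T hTmem
  have hT1 : 0 < T := hTmem.1
  have hDp := hDpos T hT1
  have hsp : 0 < Real.sqrt T := Real.sqrt_pos.2 hT1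
  show I / J T = (∫ x in (s + Real.sqrt T * a)..(s + Real.sqrt T * b), f T x) / ∫ x, f T x
  rw [hN T hTmem]
  simp only [hJdef]
  rw [show -m/T = -(m/T) by ring, Real.exp_neg]
  field_simp
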